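/- Energy boost from irregularity: if an ordered triple (V₁,V₂,V₃) of subsets of the colors of a palette Q on n colors is not ε-regular, then there are bipartitions V_i = V_i¹ ∪ V_i² (i = 1,2,3) such that q evaluated on these refined partitions exceeds q(V₁,V₂,V₃) by at least ε⁵·|V₁||V₂||V₃|/n³. -/

import Mathlib

open Finset


/-- The order-sensitive pattern density of a palette `Q` on the triple of color
sets `(V₁, V₂, V₃)`. -/
noncomputable def pdensity {n : ℕ} (Q : Finset (Fin n × Fin n × Fin n))
    (V₁ V₂ V₃ : Finset (Fin n)) : ℝ :=
  (((V₁ ×ˢ (V₂ ×ˢ V₃)).filter (fun p => p ∈ Q)).card : ℝ) /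
    ((V₁.card : ℝ) * (V₂.card : ℝ) * (V₃.card : ℝ))

/-- The energy `q(V₁,V₂,V₃) = (|V₁||V₂||V₃|/n³)·d²(V₁,V₂,V₃)`. -/
noncomputable def energy {n : ℕ} (Q : Finset (Fin n × Fin n × Fin n))
    (V₁ V₂ V₃ : Finset (Fin n)) : ℝ :=
  ((V₁.card : ℝ) * (V₂.card : ℝ) * (V₃.card : ℝ) / (n : ℝ) ^ 3) *
    (pdensity Q V₁ V₂ V₃) ^ 2

/-- The ordered triple `(V₁,V₂,V₃)` is `ε`-regular in `Q`. -/
def EpsRegular {n : ℕ} (Q : Finset (Fin n × Fin n × Fin n)) (ε : ℝ)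
    (V₁ V₂ V₃ : Finset (Fin n)) : Prop :=
  ∀ W₁ ⊆ V₁, ∀ W₂ ⊆ V₂, ∀ W₃ ⊆ V₃,
    ε * (V₁.card : ℝ) ≤ (W₁.card : ℝ) →
    ε * (V₂.card : ℝ) ≤ (W₂.card : ℝ) →
    ε * (V₃.card : ℝ) ≤ (W₃.card : ℝ) →
    |pdensity Q W₁ W₂ W₃ - pdensity Q V₁ V₂ V₃| ≤ ε


noncomputable def cnt {n : ℕ} (Q : Finset (Fin n × Fin n × Fin n))
    (A B C : Finset (Fin n)) : ℝ :=
  (((A ×ˢ (B ×ˢ C)).filter (fun p => p ∈ Q)).card : ℝ)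

lemma cnt_nonneg {n : ℕ} (Q : Finset (Fin n × Fin n × Fin n)) (A B C : Finset (Fin n)) :
    0 ≤ cnt Q A B C := Nat.cast_nonneg _

lemma cnt_add₁ {n : ℕ} (Q : Finset (Fin n × Fin n × Fin n)) {A A' : Finset (Fin n)}
    (B C : Finset (Fin n)) (h : Disjoint A A') :
    cnt Q (A ∪ A') B C = cnt Q A B C + cnt Q A' B C := by
  unfold cnt
  rw [union_product, filter_union, card_union_of_disjoint, Nat.cast_add]
  exact disjoint_filter_filter (disjoint_left.2 fun p hp hp' =>
    disjoint_left.1 h (mem_product.1 hp).1 (mem_product.1 hp').1)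

lemma cnt_add₂ {n : ℕ} (Q : Finset (Fin n × Fin n × Fin n)) (A : Finset (Fin n))
    {B B' : Finset (Fin n)} (C : Finset (Fin n)) (h : Disjoint B B') :
    cnt Q A (B ∪ B') C = cnt Q A B C + cnt Q A B' C := by
  unfold cnt
  rw [union_product, product_union, filter_union, card_union_of_disjoint, Nat.cast_add]
  refine disjoint_filter_filter (disjoint_left.2 fun p hp hp' => ?_)
  have h1 := (mem_product.1 (mem_product.1 hp).2).1
  have h2 := (mem_product.1 (mem_product.1 hp').2).1
  exact disjoint_left.1 h h1 h2

lemma cnt_add₃ {n : ℕ} (Q : Finset (Fin n × Fin n × Fin n)) (A B : Finset (Fin n))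
    {C C' : Finset (Fin n)} (h : Disjoint C C') :
    cnt Q A B (C ∪ C') = cnt Q A B C + cnt Q A B C' := by
  unfold cnt
  rw [product_union, product_union, filter_union, card_union_of_disjoint, Nat.cast_add]
  refine disjoint_filter_filter (disjoint_left.2 fun p hp hp' => ?_)
  have h1 := (mem_product.1 (mem_product.1 hp).2).2
  have h2 := (mem_product.1 (mem_product.1 hp').2).2
  exact disjoint_left.1 h h1 h2

lemma cnt_empty_of_card {n : ℕ} (Q : Finset (Fin n × Fin n × Fin n))
    {A B C : Finset (Fin n)} (h : (A.card : ℝ) * B.card * C.card = 0) :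
    cnt Q A B C = 0 := by
  have : A = ∅ ∨ B = ∅ ∨ C = ∅ := by
    rcases mul_eq_zero.1 h with h' | h'
    · rcases mul_eq_zero.1 h' with h'' | h''
      · exact Or.inl (by simpa using h'')
      · exact Or.inr (Or.inl (by simpa using h''))
    · exact Or.inr (Or.inr (by simpa using h'))
  unfold cnt
  rcases this with rfl | rfl | rfl <;> simp

lemma pdensity_eq {n : ℕ} (Q : Finset (Fin n × Fin n × Fin n)) (A B C : Finset (Fin n)) :
    pdensity Q A B C = cnt Q A B C / ((A.card : ℝ) * B.card * C.card) := rfl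

lemma energy_eq {n : ℕ} (Q : Finset (Fin n × Fin n × Fin n)) (A B C : Finset (Fin n)) :
    energy Q A B C = (cnt Q A B C) ^ 2 / ((A.card : ℝ) * B.card * C.card) / (n : ℝ) ^ 3 := by
  unfold energy
  rw [pdensity_eq]
  by_cases h : (A.card : ℝ) * B.card * C.card = 0
  · rw [h, cnt_empty_of_card Q h] ; simp
  · have ha : (A.card : ℝ) ≠ 0 := left_ne_zero_of_mul (left_ne_zero_of_mul h)
    have hb : (B.card : ℝ) ≠ 0 := right_ne_zero_of_mul (left_ne_zero_of_mul h)
    have hc : (C.card : ℝ) ≠ 0 := right_ne_zero_of_mul h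
    by_cases hn : (n : ℝ) = 0
    · rw [hn] ; simp
    · field_simp

lemma triple_sum_eq (F : Bool → Bool → Bool → ℝ) :
    ∑ b₁ : Bool, ∑ b₂ : Bool, ∑ b₃ : Bool, F b₁ b₂ b₃
      = ∑ p : Bool × Bool × Bool, F p.1 p.2.1 p.2.2 := by
  rw [Fintype.sum_prod_type]
  exact Finset.sum_congr rfl fun a _ => by rw [Fintype.sum_prod_type]

lemma defect {eW eV mW mV ε : ℝ} (hmW : 0 < mW) (hlt : mW < mV)
    (hε : 0 < ε) (h3 : ε ^ 3 * mV ≤ mW) (hd : ε < |eW / mW - eV / mV|) :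
    eV ^ 2 / mV + ε ^ 5 * mV ≤ eW ^ 2 / mW + (eV - eW) ^ 2 / (mV - mW) := by
  have hmV : 0 < mV := hmW.trans hlt
  have hdiff : 0 < mV - mW := by linarith
  have h1 : ε ^ 2 < (eW / mW - eV / mV) ^ 2 := by
    have := pow_lt_pow_left₀ hd (le_of_lt hε) two_ne_zero
    rwa [sq_abs] at this
  have h2' : (eW / mW - eV / mV) * (mW * mV) = eW * mV - eV * mW := by
    field_simp
  have h2 : (eW / mW - eV / mV) ^ 2 * (mW * mV) ^ 2 = (eW * mV - eV * mW) ^ 2 := by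
    rw [← h2'] ; ring
  have hsq : ε ^ 2 * (mW * mV) ^ 2 < (eW * mV - eV * mW) ^ 2 := by
    rw [← h2]
    exact mul_lt_mul_of_pos_right h1 (by positivity)
  have hid : eW ^ 2 / mW + (eV - eW) ^ 2 / (mV - mW) - eV ^ 2 / mV
      = (eW * mV - eV * mW) ^ 2 / (mW * (mV - mW) * mV) := by
    field_simp
    ring
  have hD : 0 < mW * (mV - mW) * mV := by positivity
  have hfin : ε ^ 5 * mV ≤ (eW * mV - eV * mW) ^ 2 / (mW * (mV - mW) * mV) := by
    rw [le_div_iff₀ hD]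
    nlinarith [hsq, mul_le_mul h3 (show mV - mW ≤ mV by linarith) (le_of_lt hdiff)
      (le_of_lt hmW), mul_pos (mul_pos (pow_pos hε 2) hmV) hmW]
  linarith [hid, hfin]

lemma prod3_le {a b c A B C : ℝ} (hb : b ≤ B) (hc : c ≤ C) (hA : 0 ≤ A)
    (hbp : 0 < b) (hcp : 0 < c) (heq : a * b * c = A * B * C) : A ≤ a := by
  nlinarith [mul_pos hbp hcp,
    mul_le_mul_of_nonneg_left (mul_le_mul hb hc (le_of_lt hcp) (hbp.le.trans hb)) hA]

theorem energy_boost_of_irregular {n : ℕ} (Q : Finset (Fin n × Fin n × Fin n))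
    (ε : ℝ) (hε : 0 < ε) (V₁ V₂ V₃ : Finset (Fin n))
    (h : ¬ EpsRegular Q ε V₁ V₂ V₃) :
    ∃ f₁ f₂ f₃ : Bool → Finset (Fin n),
      f₁ true ∪ f₁ false = V₁ ∧ Disjoint (f₁ true) (f₁ false) ∧
      f₂ true ∪ f₂ false = V₂ ∧ Disjoint (f₂ true) (f₂ false) ∧
      f₃ true ∪ f₃ false = V₃ ∧ Disjoint (f₃ true) (f₃ false) ∧
      energy Q V₁ V₂ V₃ +
          ε ^ 5 * ((V₁.card : ℝ) * (V₂.card : ℝ) * (V₃.card : ℝ)) / (n : ℝ) ^ 3 ≤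
        ∑ b₁ : Bool, ∑ b₂ : Bool, ∑ b₃ : Bool, energy Q (f₁ b₁) (f₂ b₂) (f₃ b₃) := by
  rw [EpsRegular] at h
  push_neg at h
  obtain ⟨W₁, hW₁, W₂, hW₂, W₃, hW₃, h₁, h₂, h₃, hd⟩ := h
  have hW₁pos : 0 < (W₁.card : ℝ) := by
    rcases Nat.eq_zero_or_pos W₁.card with hz | hp
    · exfalso
      have hW : W₁ = ∅ := card_eq_zero.1 hz
      have hzr : (W₁.card : ℝ) = 0 := by exact_mod_cast hz
      have hVz : V₁.card = 0 := by
        by_contra hV0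
        have hpos : (0:ℝ) < (V₁.card : ℝ) := by exact_mod_cast Nat.pos_of_ne_zero hV0
        nlinarith
      have hV : V₁ = ∅ := card_eq_zero.1 hVz
      rw [hW, hV] at hd
      simp [pdensity] at hd
      linarith
    · exact_mod_cast hp
  have hW₂pos : 0 < (W₂.card : ℝ) := by
    rcases Nat.eq_zero_or_pos W₂.card with hz | hp
    · exfalso
      have hW : W₂ = ∅ := card_eq_zero.1 hz
      have hzr : (W₂.card : ℝ) = 0 := by exact_mod_cast hz
      have hVz : V₂.card = 0 := by
        by_contra hV0
        have hpos : (0:ℝ) < (V₂.card : ℝ) := by exact_mod_cast Nat.pos_of_ne_zero hV0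
        nlinarith
      have hV : V₂ = ∅ := card_eq_zero.1 hVz
      rw [hW, hV] at hd
      simp [pdensity] at hd
      linarith
    · exact_mod_cast hp
  have hW₃pos : 0 < (W₃.card : ℝ) := by
    rcases Nat.eq_zero_or_pos W₃.card with hz | hp
    · exfalso
      have hW : W₃ = ∅ := card_eq_zero.1 hz
      have hzr : (W₃.card : ℝ) = 0 := by exact_mod_cast hz
      have hVz : V₃.card = 0 := by
        by_contra hV0
        have hpos : (0:ℝ) < (V₃.card : ℝ) := by exact_mod_cast Nat.pos_of_ne_zero hV0
        nlinarith
      have hV : V₃ = ∅ := card_eq_zero.1 hVz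
      rw [hW, hV] at hd
      simp [pdensity] at hd
      linarith
    · exact_mod_cast hp
  have hV₁pos : 0 < (V₁.card : ℝ) := lt_of_lt_of_le hW₁pos (by exact_mod_cast card_le_card hW₁)
  have hV₂pos : 0 < (V₂.card : ℝ) := lt_of_lt_of_le hW₂pos (by exact_mod_cast card_le_card hW₂)
  have hV₃pos : 0 < (V₃.card : ℝ) := lt_of_lt_of_le hW₃pos (by exact_mod_cast card_le_card hW₃)
  have hnn : 0 < n := by
    obtain ⟨a, -⟩ := card_pos.1 (show 0 < V₁.card by exact_mod_cast hV₁pos)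
    exact a.pos
  have hn3 : (0 : ℝ) < (n : ℝ) ^ 3 := by positivity
  set mV : ℝ := (V₁.card : ℝ) * V₂.card * V₃.card with hmVdef
  set mW : ℝ := (W₁.card : ℝ) * W₂.card * W₃.card with hmWdef
  set eV : ℝ := cnt Q V₁ V₂ V₃ with heVdef
  set eW : ℝ := cnt Q W₁ W₂ W₃ with heWdef
  have hmWpos : 0 < mW := by rw [hmWdef] ; positivity
  have hmVpos : 0 < mV := by rw [hmVdef] ; positivity
  have hε3 : ε ^ 3 * mV ≤ mW := by
    have t1 : ε * (V₁.card : ℝ) * (ε * V₂.card) ≤ (W₁.card : ℝ) * W₂.card :=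
      mul_le_mul h₁ h₂ (by positivity) (Nat.cast_nonneg _)
    have t2 : ε * (V₁.card : ℝ) * (ε * V₂.card) * (ε * V₃.card)
        ≤ (W₁.card : ℝ) * W₂.card * W₃.card :=
      mul_le_mul t1 h₃ (by positivity) (by positivity)
    calc ε ^ 3 * mV = ε * (V₁.card : ℝ) * (ε * V₂.card) * (ε * V₃.card) := by
          rw [hmVdef] ; ring
      _ ≤ mW := by rw [hmWdef] ; exact t2
  have hdd : ε < |eW / mW - eV / mV| := by
    rw [pdensity_eq, pdensity_eq] at hd
    exact hd
  have l1 : (W₁.card : ℝ) ≤ V₁.card := by exact_mod_cast card_le_card hW₁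
  have l2 : (W₂.card : ℝ) ≤ V₂.card := by exact_mod_cast card_le_card hW₂
  have l3 : (W₃.card : ℝ) ≤ V₃.card := by exact_mod_cast card_le_card hW₃
  have hmWV : mW < mV := by
    have hle : mW ≤ mV := by
      rw [hmVdef, hmWdef]
      exact mul_le_mul (mul_le_mul l1 l2 (le_of_lt hW₂pos) (le_of_lt hV₁pos)) l3
        (le_of_lt hW₃pos) (by positivity)
    rcases lt_or_eq_of_le hle with hlt | heq
    · exact hlt
    · exfalso
      have heq' : (W₁.card : ℝ) * W₂.card * W₃.card
          = (V₁.card : ℝ) * V₂.card * V₃.card := by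
        rw [← hmWdef, ← hmVdef] ; exact heq
      have e1 : (V₁.card : ℝ) ≤ W₁.card := prod3_le l2 l3 hV₁pos.le hW₂pos hW₃pos heq'
      have e2 : (V₂.card : ℝ) ≤ W₂.card :=
        prod3_le l1 l3 hV₂pos.le hW₁pos hW₃pos (by linear_combination heq')
      have e3 : (V₃.card : ℝ) ≤ W₃.card :=
        prod3_le l1 l2 hV₃pos.le hW₁pos hW₂pos (by linear_combination heq')
      have hw1 : W₁ = V₁ := eq_of_subset_of_card_le hW₁ (by exact_mod_cast e1)
      have hw2 : W₂ = V₂ := eq_of_subset_of_card_le hW₂ (by exact_mod_cast e2)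
      have hw3 : W₃ = V₃ := eq_of_subset_of_card_le hW₃ (by exact_mod_cast e3)
      rw [hw1, hw2, hw3, sub_self, abs_zero] at hd
      linarith
  set g₁ : Bool → Finset (Fin n) := fun b => cond b W₁ (V₁ \ W₁) with hg₁
  set g₂ : Bool → Finset (Fin n) := fun b => cond b W₂ (V₂ \ W₂) with hg₂
  set g₃ : Bool → Finset (Fin n) := fun b => cond b W₃ (V₃ \ W₃) with hg₃
  refine ⟨g₁, g₂, g₃, union_sdiff_of_subset hW₁, disjoint_sdiff,
    union_sdiff_of_subset hW₂, disjoint_sdiff,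
    union_sdiff_of_subset hW₃, disjoint_sdiff, ?_⟩
  -- abbreviations for the eight parts
  set E : Bool × Bool × Bool → ℝ :=
    fun p => cnt Q (g₁ p.1) (g₂ p.2.1) (g₃ p.2.2) with hE
  set M : Bool × Bool × Bool → ℝ :=
    fun p => ((g₁ p.1).card : ℝ) * ((g₂ p.2.1).card : ℝ) * ((g₃ p.2.2).card : ℝ) with hM
  have hMnn : ∀ p, 0 ≤ M p := fun p => by rw [hM] ; positivity
  have hE0 : ∀ p, M p = 0 → E p = 0 := fun p hp => cnt_empty_of_card Q hp
  have hEw : E (true, true, true) = eW := by rw [hE, heWdef] ; rfl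
  have hMw : M (true, true, true) = mW := by rw [hM, hmWdef] ; rfl
  -- additivity of counts
  have k₃ : ∀ A B : Finset (Fin n),
      cnt Q A B W₃ + cnt Q A B (V₃ \ W₃) = cnt Q A B V₃ := fun A B => by
    rw [← cnt_add₃ Q A B disjoint_sdiff, union_sdiff_of_subset hW₃]
  have k₂ : ∀ (A C : Finset (Fin n)),
      cnt Q A W₂ C + cnt Q A (V₂ \ W₂) C = cnt Q A V₂ C := fun A C => by
    rw [← cnt_add₂ Q A C disjoint_sdiff, union_sdiff_of_subset hW₂]
  have k₁ : ∀ (B C : Finset (Fin n)),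
      cnt Q W₁ B C + cnt Q (V₁ \ W₁) B C = cnt Q V₁ B C := fun B C => by
    rw [← cnt_add₁ Q B C disjoint_sdiff, union_sdiff_of_subset hW₁]
  have hEadd : ∑ p : Bool × Bool × Bool, E p = eV := by
    rw [hE, ← triple_sum_eq (fun b₁ b₂ b₃ => cnt Q (g₁ b₁) (g₂ b₂) (g₃ b₃))]
    simp only [hg₁, hg₂, hg₃, Fintype.sum_bool, Bool.cond_true, Bool.cond_false]
    rw [k₃ W₁ W₂, k₃ W₁ (V₂ \ W₂), k₃ (V₁ \ W₁) W₂, k₃ (V₁ \ W₁) (V₂ \ W₂),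
      k₂ W₁ V₃, k₂ (V₁ \ W₁) V₃, k₁ V₂ V₃, heVdef]
  have c1 : ((V₁ \ W₁).card : ℝ) = (V₁.card : ℝ) - W₁.card := by
    rw [card_sdiff_of_subset hW₁, Nat.cast_sub (card_le_card hW₁)]
  have c2 : ((V₂ \ W₂).card : ℝ) = (V₂.card : ℝ) - W₂.card := by
    rw [card_sdiff_of_subset hW₂, Nat.cast_sub (card_le_card hW₂)]
  have c3 : ((V₃ \ W₃).card : ℝ) = (V₃.card : ℝ) - W₃.card := by
    rw [card_sdiff_of_subset hW₃, Nat.cast_sub (card_le_card hW₃)]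
  have hMadd : ∑ p : Bool × Bool × Bool, M p = mV := by
    rw [hM, ← triple_sum_eq (fun b₁ b₂ b₃ =>
      ((g₁ b₁).card : ℝ) * ((g₂ b₂).card : ℝ) * ((g₃ b₃).card : ℝ))]
    simp only [hg₁, hg₂, hg₃, Fintype.sum_bool, Bool.cond_true, Bool.cond_false]
    rw [c1, c2, c3, hmVdef]
    ring
  -- split off the (true,true,true) part
  set t : Finset (Bool × Bool × Bool) :=
    (univ : Finset (Bool × Bool × Bool)).erase (true, true, true) with htdef
  have ht : ((true, true, true) : Bool × Bool × Bool) ∈ (univ : Finset _) := mem_univ _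
  have hsplitE : E (true, true, true) + ∑ p ∈ t, E p = ∑ p : Bool × Bool × Bool, E p :=
    add_sum_erase _ E ht
  have hsplitM : M (true, true, true) + ∑ p ∈ t, M p = ∑ p : Bool × Bool × Bool, M p :=
    add_sum_erase _ M ht
  have hsplitG : (E (true, true, true)) ^ 2 / M (true, true, true)
      + ∑ p ∈ t, (E p) ^ 2 / M p = ∑ p : Bool × Bool × Bool, (E p) ^ 2 / M p :=
    add_sum_erase _ (fun p => (E p) ^ 2 / M p) ht
  have hsE : ∑ p ∈ t, E p = eV - eW := by
    rw [hEw] at hsplitE ; linarith [hEadd]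
  have hsM : ∑ p ∈ t, M p = mV - mW := by
    rw [hMw] at hsplitM ; linarith [hMadd]
  -- Cauchy–Schwarz on the remaining seven parts
  have cauchy : (∑ p ∈ t, E p) ^ 2 ≤ (∑ p ∈ t, (E p) ^ 2 / M p) * (∑ p ∈ t, M p) := by
    have hCS := Finset.sum_mul_sq_le_sq_mul_sq t (fun p => E p / Real.sqrt (M p))
      (fun p => Real.sqrt (M p))
    have e1 : ∑ p ∈ t, E p / Real.sqrt (M p) * Real.sqrt (M p) = ∑ p ∈ t, E p := by
      refine Finset.sum_congr rfl fun p _ => ?_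
      rcases eq_or_lt_of_le (hMnn p) with hz | hpos
      · rw [← hz, hE0 p hz.symm] ; simp
      · rw [div_mul_cancel₀ _ (Real.sqrt_pos.2 hpos).ne']
    have e2 : ∑ p ∈ t, (E p / Real.sqrt (M p)) ^ 2 = ∑ p ∈ t, (E p) ^ 2 / M p := by
      refine Finset.sum_congr rfl fun p _ => ?_
      rw [div_pow, Real.sq_sqrt (hMnn p)]
    have e3 : ∑ p ∈ t, (Real.sqrt (M p)) ^ 2 = ∑ p ∈ t, M p := by
      refine Finset.sum_congr rfl fun p _ => ?_
      exact Real.sq_sqrt (hMnn p)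
    rw [e1, e2, e3] at hCS
    exact hCS
  have hGt : (eV - eW) ^ 2 / (mV - mW) ≤ ∑ p ∈ t, (E p) ^ 2 / M p := by
    rw [div_le_iff₀ (by linarith : (0:ℝ) < mV - mW)]
    calc (eV - eW) ^ 2 = (∑ p ∈ t, E p) ^ 2 := by rw [hsE]
      _ ≤ (∑ p ∈ t, (E p) ^ 2 / M p) * (∑ p ∈ t, M p) := cauchy
      _ = (∑ p ∈ t, (E p) ^ 2 / M p) * (mV - mW) := by rw [hsM]
  have hkey : eV ^ 2 / mV + ε ^ 5 * mV ≤ ∑ p : Bool × Bool × Bool, (E p) ^ 2 / M p := by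
    have hdef := defect hmWpos hmWV hε hε3 hdd
    rw [hEw, hMw] at hsplitG
    linarith
  -- convert the goal
  have lhs_eq : energy Q V₁ V₂ V₃ + ε ^ 5 * mV / (n : ℝ) ^ 3
      = (eV ^ 2 / mV + ε ^ 5 * mV) / (n : ℝ) ^ 3 := by
    rw [energy_eq, ← hmVdef, ← heVdef, ← add_div]
  have rhs_eq : ∑ b₁ : Bool, ∑ b₂ : Bool, ∑ b₃ : Bool, energy Q (g₁ b₁) (g₂ b₂) (g₃ b₃)
      = (∑ p : Bool × Bool × Bool, (E p) ^ 2 / M p) / (n : ℝ) ^ 3 := by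
    simp only [energy_eq, ← Finset.sum_div]
    rw [triple_sum_eq (fun b₁ b₂ b₃ => (cnt Q (g₁ b₁) (g₂ b₂) (g₃ b₃)) ^ 2 /
      (((g₁ b₁).card : ℝ) * ((g₂ b₂).card : ℝ) * ((g₃ b₃).card : ℝ)))]
  rw [lhs_eq, rhs_eq]
  gcongr
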